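/- Let V be a real separable Hilbert space with orthonormal basis (e_k)_{k≥1}, let (λ_k)_{k≥1} be strictly positive real numbers, and let μ be a σ-finite Borel measure on V with K₁ := sup_{‖v‖≤1} ∫_V ( ⟨u,v⟩² ∧ 1 ) μ(du) < ∞. Then for all integers 1 ≤ m ≤ n: ∫₀^∞ ∫_V ( ( ∑_{k=m}^n e^{−2λ_k s} ⟨u,e_k⟩² ) ∧ 1 ) μ(du) ds ≤ (3K₁/2) ∑_{k=m}^n 1/λ_k + 2 ∫_V max_{m≤k≤n} ( log⁺|⟨u,e_k⟩| / λ_k ) μ(du). -/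

import Mathlib

open MeasureTheory Filter Topology
open scoped RealInnerProductSpace ENNReal NNReal

private lemma aux_exp_lint (b t : ℝ) (hb : 0 < b) :
    ∫⁻ s in Set.Ioi t, ENNReal.ofReal (Real.exp (-(b * s)))
      = ENNReal.ofReal (Real.exp (-(b * t)) / b) := by
  rw [← MeasureTheory.ofReal_integral_eq_lintegral_ofReal]
  · congr 1
    have := MeasureTheory.integral_comp_mul_left_Ioi (fun x => Real.exp (-x)) t hb
    simp only [smul_eq_mul] at this
    rw [this, integral_exp_neg_Ioi, inv_mul_eq_div]
  · have := exp_neg_integrableOn_Ioi t hb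
    simpa [neg_mul, IntegrableOn] using this
  · filter_upwards with s using (Real.exp_pos _).le

private lemma aux_key (a l t : ℝ) (hl : 0 < l) (ht : Real.log (max |a| 1) / l ≤ t) :
    Real.exp (-(2 * l * t)) * a ^ 2 ≤ min (a ^ 2) 1 := by
  have hM : (0:ℝ) < max |a| 1 := lt_of_lt_of_le one_pos (le_max_right _ _)
  have hmaxsq : max (a ^ 2) 1 = (max |a| 1) ^ 2 := by
    rcases le_total |a| 1 with h | h
    · rw [max_eq_right h, one_pow, max_eq_right]
      nlinarith [abs_nonneg a, sq_abs a]
    · rw [max_eq_left h, sq_abs, max_eq_left]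
      nlinarith [abs_nonneg a, sq_abs a]
  have hsplit : a ^ 2 = max (a ^ 2) 1 * min (a ^ 2) 1 := by
    rcases le_total (a ^ 2) 1 with h | h <;>
      simp [max_eq_right, max_eq_left, min_eq_left, min_eq_right, h]
  have hexp : Real.exp (-(2 * l * t)) * max (a ^ 2) 1 ≤ 1 := by
    rw [hmaxsq, ← Real.exp_log (pow_pos hM 2), ← Real.exp_add, Real.exp_le_one_iff,
      Real.log_pow]
    have : Real.log (max |a| 1) ≤ l * t := by
      rw [div_le_iff₀ hl] at ht; linarith [ht]
    push_cast
    nlinarith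
  calc Real.exp (-(2 * l * t)) * a ^ 2
      = (Real.exp (-(2 * l * t)) * max (a ^ 2) 1) * min (a ^ 2) 1 := by
        conv_lhs => rw [hsplit, ← mul_assoc]
    _ ≤ 1 * min (a ^ 2) 1 :=
        mul_le_mul_of_nonneg_right hexp (le_min (sq_nonneg a) zero_le_one)
    _ = min (a ^ 2) 1 := one_mul _

theorem stmt13
    {V : Type*}
    [NormedAddCommGroup V] [InnerProductSpace ℝ V] [CompleteSpace V] [SecondCountableTopology V]
    [MeasurableSpace V] [BorelSpace V]
    (e : ℕ → V) (he : Orthonormal ℝ e)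
    (lam : ℕ → ℝ) (hpos : ∀ k, 0 < lam k)
    (μ : Measure V) [SigmaFinite μ]
    (K : ℝ≥0∞)
    (hK : K = ⨆ v ∈ Metric.closedBall (0 : V) 1,
        ∫⁻ u, ENNReal.ofReal (min (⟪u, v⟫ ^ 2) 1) ∂μ)
    (hKfin : K < ⊤)
    (m n : ℕ) (hm : 1 ≤ m) (hmn : m ≤ n) :
    (∫⁻ s in Set.Ioi (0 : ℝ), ∫⁻ u,
        ENNReal.ofReal (min (∑ k ∈ Finset.Icc m n,
          Real.exp (-(2 * lam k * s)) * ⟪u, e k⟫ ^ 2) 1) ∂μ)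
      ≤ 3 * K / 2 * ENNReal.ofReal (∑ k ∈ Finset.Icc m n, 1 / lam k)
        + 2 * ∫⁻ u, (((Finset.Icc m n).sup fun k =>
            Real.toNNReal (Real.log (max |⟪u, e k⟫| 1) / lam k) : ℝ≥0) : ℝ≥0∞) ∂μ := by
  have hinner : ∀ k, Measurable fun u : V => ⟪u, e k⟫ := fun k =>
    (continuous_id.inner continuous_const).measurable
  -- Tonelli: swap the order of integration
  have hFmeas : AEMeasurable (Function.uncurry fun (s : ℝ) (u : V) =>
      ENNReal.ofReal (min (∑ k ∈ Finset.Icc m n,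
        Real.exp (-(2 * lam k * s)) * ⟪u, e k⟫ ^ 2) 1))
      (((volume : Measure ℝ).restrict (Set.Ioi 0)).prod μ) := by
    refine Measurable.aemeasurable ?_
    apply Measurable.ennreal_ofReal
    apply Measurable.min _ measurable_const
    apply Finset.measurable_sum
    intro k _
    exact (Real.measurable_exp.comp ((measurable_fst.const_mul (2 * lam k)).neg)).mul
      (((hinner k).comp measurable_snd).pow_const 2)
  have swap : (∫⁻ s in Set.Ioi (0 : ℝ), ∫⁻ u,
        ENNReal.ofReal (min (∑ k ∈ Finset.Icc m n,
          Real.exp (-(2 * lam k * s)) * ⟪u, e k⟫ ^ 2) 1) ∂μ)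
      = ∫⁻ u, (∫⁻ s in Set.Ioi (0 : ℝ),
          ENNReal.ofReal (min (∑ k ∈ Finset.Icc m n,
            Real.exp (-(2 * lam k * s)) * ⟪u, e k⟫ ^ 2) 1)) ∂μ :=
    lintegral_lintegral_swap hFmeas
  rw [swap]
  -- pointwise (in u) bound for the inner integral
  have key : ∀ u : V, (∫⁻ s in Set.Ioi (0 : ℝ),
        ENNReal.ofReal (min (∑ k ∈ Finset.Icc m n,
          Real.exp (-(2 * lam k * s)) * ⟪u, e k⟫ ^ 2) 1))
      ≤ (((Finset.Icc m n).sup fun k =>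
            Real.toNNReal (Real.log (max |⟪u, e k⟫| 1) / lam k) : ℝ≥0) : ℝ≥0∞)
        + ∑ k ∈ Finset.Icc m n,
            ENNReal.ofReal (min (⟪u, e k⟫ ^ 2) 1) * ENNReal.ofReal (1 / (2 * lam k)) := by
    intro u
    set tN : ℝ≥0 := (Finset.Icc m n).sup fun k =>
      Real.toNNReal (Real.log (max |⟪u, e k⟫| 1) / lam k) with htN
    have ht0 : (0:ℝ) ≤ (tN : ℝ) := tN.coe_nonneg
    have htk : ∀ k ∈ Finset.Icc m n,
        Real.log (max |⟪u, e k⟫| 1) / lam k ≤ (tN : ℝ) := by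
      intro k hk
      have h1 : 0 ≤ Real.log (max |⟪u, e k⟫| 1) / lam k :=
        div_nonneg (Real.log_nonneg (le_max_right _ _)) (hpos k).le
      have h2 := Finset.le_sup (f := fun k =>
        Real.toNNReal (Real.log (max |⟪u, e k⟫| 1) / lam k)) hk
      calc Real.log (max |⟪u, e k⟫| 1) / lam k
          = ((Real.toNNReal (Real.log (max |⟪u, e k⟫| 1) / lam k) : ℝ≥0) : ℝ) :=
            (Real.coe_toNNReal _ h1).symm
        _ ≤ (tN : ℝ) := NNReal.coe_le_coe.2 h2
    rw [← Set.Ioc_union_Ioi_eq_Ioi ht0,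
      lintegral_union measurableSet_Ioi (Set.Ioc_disjoint_Ioi le_rfl)]
    refine add_le_add ?_ ?_
    · calc (∫⁻ s in Set.Ioc (0:ℝ) (tN : ℝ), ENNReal.ofReal (min (∑ k ∈ Finset.Icc m n,
              Real.exp (-(2 * lam k * s)) * ⟪u, e k⟫ ^ 2) 1))
          ≤ ∫⁻ _ in Set.Ioc (0:ℝ) (tN : ℝ), 1 :=
            lintegral_mono fun s => ENNReal.ofReal_le_one.2 (min_le_right _ _)
        _ = ENNReal.ofReal (tN : ℝ) := by
            rw [setLIntegral_one, Real.volume_Ioc, sub_zero]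
        _ = (tN : ℝ≥0∞) := ENNReal.ofReal_coe_nnreal
    · calc (∫⁻ s in Set.Ioi ((tN : ℝ)), ENNReal.ofReal (min (∑ k ∈ Finset.Icc m n,
              Real.exp (-(2 * lam k * s)) * ⟪u, e k⟫ ^ 2) 1))
          ≤ ∫⁻ s in Set.Ioi ((tN : ℝ)), ∑ k ∈ Finset.Icc m n,
              ENNReal.ofReal (Real.exp (-(2 * lam k * s)) * ⟪u, e k⟫ ^ 2) := by
            refine lintegral_mono fun s => ?_
            rw [← ENNReal.ofReal_sum_of_nonneg fun k _ => by positivity]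
            exact ENNReal.ofReal_le_ofReal (min_le_left _ _)
        _ = ∑ k ∈ Finset.Icc m n, ∫⁻ s in Set.Ioi ((tN : ℝ)),
              ENNReal.ofReal (Real.exp (-(2 * lam k * s)) * ⟪u, e k⟫ ^ 2) := by
            refine lintegral_finset_sum _ fun k _ => ?_
            exact ((Real.measurable_exp.comp ((measurable_id.const_mul (2 * lam k)).neg)).mul
              measurable_const).ennreal_ofReal
        _ ≤ ∑ k ∈ Finset.Icc m n,
              ENNReal.ofReal (min (⟪u, e k⟫ ^ 2) 1) * ENNReal.ofReal (1 / (2 * lam k)) := by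
            refine Finset.sum_le_sum fun k hk => ?_
            have hl : (0:ℝ) < 2 * lam k := by linarith [hpos k]
            have hmul : ∀ s : ℝ, ENNReal.ofReal (Real.exp (-(2 * lam k * s)) * ⟪u, e k⟫ ^ 2)
                = ENNReal.ofReal (Real.exp (-(2 * lam k * s))) * ENNReal.ofReal (⟪u, e k⟫ ^ 2) :=
              fun s => ENNReal.ofReal_mul (Real.exp_pos _).le
            simp_rw [hmul]
            rw [lintegral_mul_const' _ _ ENNReal.ofReal_ne_top, aux_exp_lint _ _ hl,
              ← ENNReal.ofReal_mul (by positivity), ← ENNReal.ofReal_mul (le_min (sq_nonneg _) zero_le_one)]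
            refine ENNReal.ofReal_le_ofReal ?_
            calc Real.exp (-(2 * lam k * (tN : ℝ))) / (2 * lam k) * ⟪u, e k⟫ ^ 2
                = Real.exp (-(2 * lam k * (tN : ℝ))) * ⟪u, e k⟫ ^ 2 * (1 / (2 * lam k)) := by
                  ring
              _ ≤ min (⟪u, e k⟫ ^ 2) 1 * (1 / (2 * lam k)) :=
                  mul_le_mul_of_nonneg_right
                    (aux_key _ _ _ (hpos k) (htk k hk)) (by positivity)
  refine le_trans (lintegral_mono key) ?_
  have hg : ∀ k, Measurable fun u : V => ENNReal.ofReal (min (⟪u, e k⟫ ^ 2) 1) := fun k =>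
    (((hinner k).pow_const 2).min measurable_const).ennreal_ofReal
  rw [lintegral_add_right _ (Finset.measurable_sum _ fun k _ => (hg k).mul_const _),
    lintegral_finset_sum _ fun k _ => (hg k).mul_const _]
  simp_rw [fun k => lintegral_mul_const (μ := μ) (ENNReal.ofReal (1 / (2 * lam k))) (hg k)]
  have hgK : ∀ k, (∫⁻ u, ENNReal.ofReal (min (⟪u, e k⟫ ^ 2) 1) ∂μ) ≤ K := by
    intro k
    have hek : e k ∈ Metric.closedBall (0 : V) 1 := by
      rw [Metric.mem_closedBall, dist_zero_right, he.1 k]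
    rw [hK]
    exact le_biSup (fun v => ∫⁻ u, ENNReal.ofReal (min (⟪u, v⟫ ^ 2) 1) ∂μ) hek
  rw [add_comm]
  refine add_le_add ?_ (le_mul_of_one_le_left zero_le one_le_two)
  calc ∑ k ∈ Finset.Icc m n, (∫⁻ u, ENNReal.ofReal (min (⟪u, e k⟫ ^ 2) 1) ∂μ)
        * ENNReal.ofReal (1 / (2 * lam k))
      ≤ ∑ k ∈ Finset.Icc m n, K * ENNReal.ofReal (1 / (2 * lam k)) :=
        Finset.sum_le_sum fun k _ => mul_le_mul_left (hgK k) _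
    _ = K * ∑ k ∈ Finset.Icc m n, ENNReal.ofReal (1 / (2 * lam k)) := by
        rw [Finset.mul_sum]
    _ = K * ENNReal.ofReal (∑ k ∈ Finset.Icc m n, 1 / (2 * lam k)) := by
        rw [ENNReal.ofReal_sum_of_nonneg fun k _ => by have := hpos k; positivity]
    _ = K / 2 * ENNReal.ofReal (∑ k ∈ Finset.Icc m n, 1 / lam k) := by
        have h1 : ∑ k ∈ Finset.Icc m n, 1 / (2 * lam k)
            = 2⁻¹ * ∑ k ∈ Finset.Icc m n, 1 / lam k := by
          rw [Finset.mul_sum]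
          exact Finset.sum_congr rfl fun k _ => by ring
        rw [h1, ENNReal.ofReal_mul (by norm_num), ← mul_assoc]
        congr 1
        · rw [ENNReal.div_eq_inv_mul, mul_comm]
          congr 1
          rw [ENNReal.ofReal_inv_of_pos two_pos, ENNReal.ofReal_ofNat]
    _ ≤ 3 * K / 2 * ENNReal.ofReal (∑ k ∈ Finset.Icc m n, 1 / lam k) := by
        refine mul_le_mul_left (ENNReal.div_le_div_right ?_ 2) _
        exact le_mul_of_one_le_left zero_le (by norm_num)
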